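/- For every α > 0 and every β > 0 there exists a preference profile P over four candidates {a,b,c,d} such that: (i) the pair {a,b} has deletion-clone value at most α and swap-clone value at most β; (ii) a is the unique Schulze winner of P (S_{a,y} ≥ S_{y,a} for all y ≠ a, with at least one strict inequality against every other candidate's claim, so no other candidate is a Schulze winner); (iii) d is the unique Schulze winner of P_{-a}; and (iv) c is the unique Schulze winner of P_{-b}. Consequently, for four or more candidates, Schulze's rule is not weakly independent of α-deletion clones or of β-swap clones for any α > 0 or β > 0. (An explicit witness, for k large enough that 13/(2k+26) is below min(α,β), is the profile with k+7 voters d≻a≻b≻c, k voters c≻a≻b≻d, 10 voters b≻c≻a≻d, 2 voters a≻b≻d≻c, 3 voters c≻a≻d≻b, and 4 voters d≻c≻a≻b.) -/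

import Mathlib

open Finset

/-- A ranking (strict total order) of the candidate set `D ⊆ Fin 4`, encoded as a
duplicate-free list (best candidate first) whose set of elements is exactly `D`. -/
def Ranking (D : Finset (Fin 4)) : Type := {l : List (Fin 4) // l.Nodup ∧ l.toFinset = D}

/-- The (0-indexed) position of candidate `x` in ranking `r`. -/
def rpos {D : Finset (Fin 4)} (r : Ranking D) (x : Fin 4) : ℕ := r.val.idxOf x

/-- Delete candidate `x` from a ranking. -/
def eraseCand {D : Finset (Fin 4)} (x : Fin 4) (r : Ranking D) : Ranking (D.erase x) :=
  ⟨r.val.erase x, r.2.1.erase x, by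
    ext c
    simp [List.Nodup.mem_erase_iff r.2.1, Finset.mem_erase, ← r.2.2]⟩

/-- The pairwise margin `M_{x,y}` of `x` over `y` in a profile. -/
def margin {D : Finset (Fin 4)} {n : ℕ} (P : Fin n → Ranking D) (x y : Fin 4) : ℤ :=
  ((univ.filter fun i => rpos (P i) x < rpos (P i) y).card : ℤ) -
    ((univ.filter fun i => rpos (P i) y < rpos (P i) x).card : ℤ)

/-- `s` is the strength of some path from `x` to `y` in the candidate set `D`:
a sequence of `k ≥ 2` candidates of `D` starting at `x` and ending at `y`, whose
strength is the minimum margin along its consecutive pairs. -/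
def IsPathStrength {D : Finset (Fin 4)} {n : ℕ} (P : Fin n → Ranking D)
    (x y : Fin 4) (s : ℤ) : Prop :=
  ∃ l : List (Fin 4), 2 ≤ l.length ∧ (∀ c ∈ l, c ∈ D) ∧
    l.head? = some x ∧ l.getLast? = some y ∧
    ((l.zip l.tail).map fun p => margin P p.1 p.2).minimum = (s : WithTop ℤ)

/-- The beatpath strength `S_{x,y}`: the maximum strength over all paths from `x` to `y`. -/
noncomputable def beatpath {D : Finset (Fin 4)} {n : ℕ} (P : Fin n → Ranking D)
    (x y : Fin 4) : ℤ :=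
  sSup {s : ℤ | IsPathStrength P x y s}

/-- `x` is a Schulze winner: `x` is a candidate and `S_{x,y} ≥ S_{y,x}` for every other
candidate `y`. -/
def SchulzeWinner {D : Finset (Fin 4)} {n : ℕ} (P : Fin n → Ranking D) (x : Fin 4) : Prop :=
  x ∈ D ∧ ∀ y ∈ D, y ≠ x → beatpath P y x ≤ beatpath P x y


def r1 : Ranking (univ : Finset (Fin 4)) := ⟨[3,0,1,2], by decide, by decide⟩
def r2 : Ranking (univ : Finset (Fin 4)) := ⟨[2,0,1,3], by decide, by decide⟩
def r3 : Ranking (univ : Finset (Fin 4)) := ⟨[1,2,0,3], by decide, by decide⟩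
def r4 : Ranking (univ : Finset (Fin 4)) := ⟨[0,1,3,2], by decide, by decide⟩
def r5 : Ranking (univ : Finset (Fin 4)) := ⟨[2,0,3,1], by decide, by decide⟩
def r6 : Ranking (univ : Finset (Fin 4)) := ⟨[3,2,0,1], by decide, by decide⟩

def BProf {D : Finset (Fin 4)} (k : ℕ) (q1 q2 q3 q4 q5 q6 : Ranking D) :
    Fin (2*k+26) → Ranking D := fun i =>
  if i.val < k+7 then q1 else if i.val < 2*k+7 then q2 else if i.val < 2*k+17 then q3
  else if i.val < 2*k+19 then q4 else if i.val < 2*k+22 then q5 else q6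

def blockFun {M : Type*} (k : ℕ) (v1 v2 v3 v4 v5 v6 : M) : ℕ → M := fun x =>
  if x < k+7 then v1 else if x < 2*k+7 then v2 else if x < 2*k+17 then v3
  else if x < 2*k+19 then v4 else if x < 2*k+22 then v5 else v6

lemma blockSum {M : Type*} [AddCommMonoid M] (k : ℕ) (v1 v2 v3 v4 v5 v6 : M) :
    ∑ x ∈ Finset.range (2*k+26), blockFun k v1 v2 v3 v4 v5 v6 x
    = (k+7) • v1 + k • v2 + 10 • v3 + 2 • v4 + 3 • v5 + 4 • v6 := by
  have E : ∀ a b (v : M), (∀ x, a ≤ x → x < b → blockFun k v1 v2 v3 v4 v5 v6 x = v) →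
      ∑ x ∈ Finset.Ico a b, blockFun k v1 v2 v3 v4 v5 v6 x = (b-a) • v := by
    intro a b v h
    rw [Finset.sum_congr rfl fun x hx => h x (Finset.mem_Ico.mp hx).1 (Finset.mem_Ico.mp hx).2,
      Finset.sum_const, Nat.card_Ico]
  rw [Finset.range_eq_Ico,
    ← Finset.sum_Ico_consecutive _ (by omega : 0 ≤ k+7) (by omega : k+7 ≤ 2*k+26),
    ← Finset.sum_Ico_consecutive _ (by omega : k+7 ≤ 2*k+7) (by omega : 2*k+7 ≤ 2*k+26),
    ← Finset.sum_Ico_consecutive _ (by omega : 2*k+7 ≤ 2*k+17) (by omega : 2*k+17 ≤ 2*k+26),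
    ← Finset.sum_Ico_consecutive _ (by omega : 2*k+17 ≤ 2*k+19) (by omega : 2*k+19 ≤ 2*k+26),
    ← Finset.sum_Ico_consecutive _ (by omega : 2*k+19 ≤ 2*k+22) (by omega : 2*k+22 ≤ 2*k+26),
    E 0 (k+7) v1 (by intro x h1 h2; unfold blockFun; split_ifs <;> first | rfl | omega),
    E (k+7) (2*k+7) v2 (by intro x h1 h2; unfold blockFun; split_ifs <;> first | rfl | omega),
    E (2*k+7) (2*k+17) v3 (by intro x h1 h2; unfold blockFun; split_ifs <;> first | rfl | omega),
    E (2*k+17) (2*k+19) v4 (by intro x h1 h2; unfold blockFun; split_ifs <;> first | rfl | omega),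
    E (2*k+19) (2*k+22) v5 (by intro x h1 h2; unfold blockFun; split_ifs <;> first | rfl | omega),
    E (2*k+22) (2*k+26) v6 (by intro x h1 h2; unfold blockFun; split_ifs <;> first | rfl | omega)]
  have h1 : k+7-0 = k+7 := by omega
  have h2 : 2*k+7-(k+7) = k := by omega
  have h3 : 2*k+17-(2*k+7) = 10 := by omega
  have h4 : 2*k+19-(2*k+17) = 2 := by omega
  have h5 : 2*k+22-(2*k+19) = 3 := by omega
  have h6 : 2*k+26-(2*k+22) = 4 := by omega
  rw [h1, h2, h3, h4, h5, h6]; abel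

lemma sum_BProf {M : Type*} [AddCommMonoid M] {D : Finset (Fin 4)} (k : ℕ)
    (q1 q2 q3 q4 q5 q6 : Ranking D) (f : Ranking D → M) :
    ∑ i : Fin (2*k+26), f (BProf k q1 q2 q3 q4 q5 q6 i)
    = (k+7) • f q1 + k • f q2 + 10 • f q3 + 2 • f q4 + 3 • f q5 + 4 • f q6 := by
  have h : ∀ i : Fin (2*k+26), f (BProf k q1 q2 q3 q4 q5 q6 i)
      = blockFun k (f q1) (f q2) (f q3) (f q4) (f q5) (f q6) i.val := by
    intro i; unfold BProf blockFun; split_ifs <;> rfl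
  rw [Finset.sum_congr rfl fun i _ => h i,
    Fin.sum_univ_eq_sum_range (blockFun k (f q1) (f q2) (f q3) (f q4) (f q5) (f q6)) (2*k+26),
    blockSum]

def wment {D : Finset (Fin 4)} (r : Ranking D) (x y : Fin 4) : ℤ :=
  (if rpos r x < rpos r y then 1 else 0) - (if rpos r y < rpos r x then 1 else 0)

lemma margin_eq_sum {D : Finset (Fin 4)} {n : ℕ} (P : Fin n → Ranking D) (x y : Fin 4) :
    margin P x y = ∑ i, wment (P i) x y := by
  unfold margin wment
  rw [Finset.card_filter, Finset.card_filter]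
  push_cast
  rw [← Finset.sum_sub_distrib]

lemma margin_val {D' : Finset (Fin 4)} (k : ℕ)
    (g : Ranking (univ : Finset (Fin 4)) → Ranking D') (x y : Fin 4) (v1 v2 v3 v4 v5 v6 : ℤ)
    (h1 : wment (g r1) x y = v1) (h2 : wment (g r2) x y = v2) (h3 : wment (g r3) x y = v3)
    (h4 : wment (g r4) x y = v4) (h5 : wment (g r5) x y = v5) (h6 : wment (g r6) x y = v6) :
    margin (fun i => g (BProf k r1 r2 r3 r4 r5 r6 i)) x y
    = ((k:ℤ)+7) * v1 + (k:ℤ) * v2 + 10 * v3 + 2 * v4 + 3 * v5 + 4 * v6 := by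
  calc margin (fun i => g (BProf k r1 r2 r3 r4 r5 r6 i)) x y
      = ∑ i : Fin (2*k+26), wment (g (BProf k r1 r2 r3 r4 r5 r6 i)) x y :=
        margin_eq_sum _ x y
    _ = (k+7) • wment (g r1) x y + k • wment (g r2) x y + 10 • wment (g r3) x y
        + 2 • wment (g r4) x y + 3 • wment (g r5) x y + 4 • wment (g r6) x y :=
        sum_BProf k r1 r2 r3 r4 r5 r6 (fun r => wment (g r) x y)
    _ = _ := by rw [h1, h2, h3, h4, h5, h6]; simp only [nsmul_eq_mul]; push_cast; ring

-- beatpath machinery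
variable {D : Finset (Fin 4)} {n : ℕ}

lemma margin_le_n (P : Fin n → Ranking D) (u v : Fin 4) : margin P u v ≤ n := by
  unfold margin
  have h1 : (univ.filter fun i => rpos (P i) u < rpos (P i) v).card ≤ n := by
    refine le_trans (Finset.card_filter_le _ _) ?_
    simp
  omega

lemma bddAbove_strengths (P : Fin n → Ranking D) (x y : Fin 4) :
    BddAbove {s | IsPathStrength P x y s} := by
  refine ⟨n, ?_⟩
  rintro s ⟨l, hlen, hD, hh, hl, hmin⟩
  have hmem := List.minimum_mem hmin
  obtain ⟨p, hp, hps⟩ := List.mem_map.mp hmem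
  exact hps ▸ margin_le_n P p.1 p.2

lemma le_beatpath {P : Fin n → Ranking D} {x y : Fin 4} {s : ℤ}
    (h : IsPathStrength P x y s) : s ≤ beatpath P x y :=
  le_csSup (bddAbove_strengths P x y) h

lemma path2 (P : Fin n → Ranking D) {x y : Fin 4} (hx : x ∈ D) (hy : y ∈ D) :
    IsPathStrength P x y (margin P x y) := by
  refine ⟨[x, y], by simp, ?_, rfl, by simp, ?_⟩
  · intro c hc
    rcases List.mem_pair.mp hc with rfl | rfl <;> assumption
  · simp [List.minimum_singleton]

lemma path3 (P : Fin n → Ranking D) {x y z : Fin 4} (hx : x ∈ D) (hy : y ∈ D) (hz : z ∈ D) :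
    IsPathStrength P x z (min (margin P x y) (margin P y z)) := by
  refine ⟨[x, y, z], by simp, ?_, rfl, by simp, ?_⟩
  · intro c hc
    simp only [List.mem_cons, List.not_mem_nil, or_false] at hc
    rcases hc with rfl | rfl | rfl <;> assumption
  · show ([margin P x y, margin P y z] : List ℤ).minimum = _
    rw [List.minimum_cons, List.minimum_singleton, WithTop.coe_min]

lemma crossing (A : Fin 4 → Prop) :
    ∀ (l : List (Fin 4)) (x y : Fin 4), l.head? = some x → l.getLast? = some y →
      A x → ¬ A y → ∃ p ∈ l.zip l.tail, A p.1 ∧ ¬ A p.2 := by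
  intro l
  induction l with
  | nil => intro x y h; simp at h
  | cons a t ih =>
    intro x y hh hl hAx hAy
    have hax : a = x := by simpa using hh
    subst hax
    cases t with
    | nil =>
      have : a = y := by simpa using hl
      exact absurd (this ▸ hAx) hAy
    | cons b t2 =>
      by_cases hb : A b
      · obtain ⟨p, hp, h1, h2⟩ := ih b y rfl (List.getLast?_cons_cons ▸ hl) hb hAy
        exact ⟨p, List.mem_cons_of_mem _ hp, h1, h2⟩
      · exact ⟨(a, b), by simp, hAx, hb⟩

lemma beatpath_le_of_cut (P : Fin n → Ranking D) {x y : Fin 4} (t : ℤ)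
    (A : Fin 4 → Prop) (hne : (Set.Nonempty {s | IsPathStrength P x y s}))
    (hAx : A x) (hAy : ¬ A y)
    (hcut : ∀ u v : Fin 4, u ∈ D → v ∈ D → A u → ¬ A v → margin P u v ≤ t) :
    beatpath P x y ≤ t := by
  refine csSup_le hne ?_
  rintro s ⟨l, hlen, hD, hh, hl, hmin⟩
  obtain ⟨p, hp, h1, h2⟩ := crossing A l x y hh hl hAx hAy
  have hmem : margin P p.1 p.2 ∈ (l.zip l.tail).map fun p => margin P p.1 p.2 :=
    List.mem_map_of_mem hp
  have hle := List.minimum_le_of_mem' hmem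
  rw [hmin] at hle
  have hs : s ≤ margin P p.1 p.2 := by exact_mod_cast hle
  have hu : p.1 ∈ D := hD _ (List.of_mem_zip hp).1
  have hv : p.2 ∈ D := hD _ (List.mem_of_mem_tail (List.of_mem_zip hp).2)
  exact hs.trans (hcut _ _ hu hv h1 h2)

/-- **Schulze's rule is not weakly independent of approximate clones (four candidates).**
For every `α > 0` and `β > 0` there is a preference profile `P` over the four candidates
`a = 0, b = 1, c = 2, d = 3` of `Fin 4` such that: (i) the pair `{a,b}` has deletion-clone
value at most `α` and swap-clone value at most `β`; (ii) `a` is the unique Schulze winner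
of `P`; (iii) `d` is the unique Schulze winner of `P₋a`; and (iv) `c` is the unique Schulze
winner of `P₋b`. -/
theorem schulze_not_weakly_indep_approx_clones (α β : ℝ) (hα : 0 < α) (hβ : 0 < β) :
    ∃ (n : ℕ), 1 ≤ n ∧ ∃ P : Fin n → Ranking (univ : Finset (Fin 4)),
      -- (i) {a,b} = {0,1} are α-deletion clones and β-swap clones
      ((univ.filter fun i : Fin n =>
          1 < ((rpos (P i) 0 : ℤ) - (rpos (P i) 1 : ℤ)).natAbs).card : ℝ) / n ≤ α ∧
      (∑ i : Fin n, ((((rpos (P i) 0 : ℤ) - (rpos (P i) 1 : ℤ)).natAbs : ℝ) - 1)) / n ≤ β ∧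
      -- (ii) a = 0 is the unique Schulze winner of P
      SchulzeWinner P (0 : Fin 4) ∧
      (∀ y : Fin 4, y ≠ 0 → ¬ SchulzeWinner P y) ∧
      -- (iii) d = 3 is the unique Schulze winner of P₋a
      SchulzeWinner (fun i => eraseCand 0 (P i)) (3 : Fin 4) ∧
      (∀ y : Fin 4, y ≠ 3 → ¬ SchulzeWinner (fun i => eraseCand 0 (P i)) y) ∧
      -- (iv) c = 2 is the unique Schulze winner of P₋b
      SchulzeWinner (fun i => eraseCand 1 (P i)) (2 : Fin 4) ∧
      (∀ y : Fin 4, y ≠ 2 → ¬ SchulzeWinner (fun i => eraseCand 1 (P i)) y) := by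
  
  classical
  have hm0 : 0 < min α β := lt_min hα hβ
  set k : ℕ := max 3 ⌈13 / min α β⌉₊ with hkdef
  have hk3 : 3 ≤ k := le_max_left _ _
  set P : Fin (2*k+26) → Ranking (univ : Finset (Fin 4)) := BProf k r1 r2 r3 r4 r5 r6 with hP
  -- margins of P
  have M01 : margin P 0 1 = 2*(k:ℤ)+6 :=
    (margin_val k id 0 1 1 1 (-1) 1 1 1 (by decide) (by decide) (by decide) (by decide)
      (by decide) (by decide)).trans (by ring)
  have M02 : margin P 0 2 = -8 :=
    (margin_val k id 0 2 1 (-1) (-1) 1 (-1) (-1) (by decide) (by decide) (by decide) (by decide)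
      (by decide) (by decide)).trans (by ring)
  have M03 : margin P 0 3 = 4 :=
    (margin_val k id 0 3 (-1) 1 1 1 1 (-1) (by decide) (by decide) (by decide) (by decide)
      (by decide) (by decide)).trans (by ring)
  have M10 : margin P 1 0 = -(2*(k:ℤ)+6) :=
    (margin_val k id 1 0 (-1) (-1) 1 (-1) (-1) (-1) (by decide) (by decide) (by decide)
      (by decide) (by decide) (by decide)).trans (by ring)
  have M12 : margin P 1 2 = 12 :=
    (margin_val k id 1 2 1 (-1) 1 1 (-1) (-1) (by decide) (by decide) (by decide) (by decide)
      (by decide) (by decide)).trans (by ring)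
  have M13 : margin P 1 3 = -2 :=
    (margin_val k id 1 3 (-1) 1 1 1 (-1) (-1) (by decide) (by decide) (by decide) (by decide)
      (by decide) (by decide)).trans (by ring)
  have M20 : margin P 2 0 = 8 :=
    (margin_val k id 2 0 (-1) 1 1 (-1) 1 1 (by decide) (by decide) (by decide) (by decide)
      (by decide) (by decide)).trans (by ring)
  have M23 : margin P 2 3 = 0 :=
    (margin_val k id 2 3 (-1) 1 1 (-1) 1 (-1) (by decide) (by decide) (by decide) (by decide)
      (by decide) (by decide)).trans (by ring)
  have M30 : margin P 3 0 = -4 :=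
    (margin_val k id 3 0 1 (-1) (-1) (-1) (-1) 1 (by decide) (by decide) (by decide) (by decide)
      (by decide) (by decide)).trans (by ring)
  have M31 : margin P 3 1 = 2 :=
    (margin_val k id 3 1 1 (-1) (-1) (-1) 1 1 (by decide) (by decide) (by decide) (by decide)
      (by decide) (by decide)).trans (by ring)
  have M32 : margin P 3 2 = 0 :=
    (margin_val k id 3 2 1 (-1) (-1) 1 (-1) 1 (by decide) (by decide) (by decide) (by decide)
      (by decide) (by decide)).trans (by ring)
  -- margins of P with 0 erased
  have E13 : margin (fun i => eraseCand 0 (P i)) 1 3 = -2 :=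
    (margin_val k (eraseCand 0) 1 3 (-1) 1 1 1 (-1) (-1) (by decide) (by decide) (by decide)
      (by decide) (by decide) (by decide)).trans (by ring)
  have E23 : margin (fun i => eraseCand 0 (P i)) 2 3 = 0 :=
    (margin_val k (eraseCand 0) 2 3 (-1) 1 1 (-1) 1 (-1) (by decide) (by decide) (by decide)
      (by decide) (by decide) (by decide)).trans (by ring)
  have E31 : margin (fun i => eraseCand 0 (P i)) 3 1 = 2 :=
    (margin_val k (eraseCand 0) 3 1 1 (-1) (-1) (-1) 1 1 (by decide) (by decide) (by decide)
      (by decide) (by decide) (by decide)).trans (by ring)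
  have E12 : margin (fun i => eraseCand 0 (P i)) 1 2 = 12 :=
    (margin_val k (eraseCand 0) 1 2 1 (-1) 1 1 (-1) (-1) (by decide) (by decide) (by decide)
      (by decide) (by decide) (by decide)).trans (by ring)
  -- margins of P with 1 erased
  have F02 : margin (fun i => eraseCand 1 (P i)) 0 2 = -8 :=
    (margin_val k (eraseCand 1) 0 2 1 (-1) (-1) 1 (-1) (-1) (by decide) (by decide) (by decide)
      (by decide) (by decide) (by decide)).trans (by ring)
  have F32 : margin (fun i => eraseCand 1 (P i)) 3 2 = 0 :=
    (margin_val k (eraseCand 1) 3 2 1 (-1) (-1) 1 (-1) 1 (by decide) (by decide) (by decide)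
      (by decide) (by decide) (by decide)).trans (by ring)
  have F20 : margin (fun i => eraseCand 1 (P i)) 2 0 = 8 :=
    (margin_val k (eraseCand 1) 2 0 (-1) 1 1 (-1) 1 1 (by decide) (by decide) (by decide)
      (by decide) (by decide) (by decide)).trans (by ring)
  have F03 : margin (fun i => eraseCand 1 (P i)) 0 3 = 4 :=
    (margin_val k (eraseCand 1) 0 3 (-1) 1 1 1 1 (-1) (by decide) (by decide) (by decide)
      (by decide) (by decide) (by decide)).trans (by ring)
  have hkZ : (3:ℤ) ≤ (k:ℤ) := by exact_mod_cast hk3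
  have cut12 : ∀ u v : Fin 4, u ∈ (univ : Finset (Fin 4)) → v ∈ (univ : Finset (Fin 4)) →
      (u = 1 ∨ u = 2) → ¬(v = 1 ∨ v = 2) → margin P u v ≤ 8 := by
    have key : ∀ w : Fin 4, ¬(w = 1 ∨ w = 2) → w = 0 ∨ w = 3 := by decide
    intro u v _ _ hAu hAv
    rcases hAu with rfl | rfl <;> rcases key v hAv with rfl | rfl
    all_goals first
      | (rw [M10]; try omega)
      | (rw [M13]; try omega)
      | (rw [M20]; try omega)
      | (rw [M23]; try omega)
  have B1 : beatpath P 1 0 ≤ 8 :=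
    beatpath_le_of_cut P 8 (fun u => u = 1 ∨ u = 2)
      ⟨_, path2 P (Finset.mem_univ 1) (Finset.mem_univ 0)⟩ (Or.inl rfl) (by decide) cut12
  have B2 : beatpath P 2 0 ≤ 8 :=
    beatpath_le_of_cut P 8 (fun u => u = 1 ∨ u = 2)
      ⟨_, path2 P (Finset.mem_univ 2) (Finset.mem_univ 0)⟩ (Or.inr rfl) (by decide) cut12
  have cut3 : ∀ u v : Fin 4, u ∈ (univ : Finset (Fin 4)) → v ∈ (univ : Finset (Fin 4)) →
      u = 3 → ¬(v = 3) → margin P u v ≤ 2 := by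
    have key : ∀ w : Fin 4, ¬(w = 3) → w = 0 ∨ w = 1 ∨ w = 2 := by decide
    intro u v _ _ hAu hAv
    subst hAu
    rcases key v hAv with rfl | rfl | rfl
    all_goals first
      | (rw [M30]; try omega)
      | (rw [M31]; try omega)
      | (rw [M32]; try omega)
  have B3 : beatpath P 3 0 ≤ 2 :=
    beatpath_le_of_cut P 2 (fun u => u = 3)
      ⟨_, path2 P (Finset.mem_univ 3) (Finset.mem_univ 0)⟩ rfl (by decide) cut3
  have B1' : 2*(k:ℤ)+6 ≤ beatpath P 0 1 :=
    M01 ▸ le_beatpath (path2 P (Finset.mem_univ 0) (Finset.mem_univ 1))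
  have B2' : (12:ℤ) ≤ beatpath P 0 2 := by
    have h := le_beatpath (path3 P (Finset.mem_univ 0) (Finset.mem_univ 1) (Finset.mem_univ 2))
    rw [M01, M12] at h
    exact le_trans (le_min (by omega) le_rfl) h
  have B3' : (4:ℤ) ≤ beatpath P 0 3 :=
    M03 ▸ le_beatpath (path2 P (Finset.mem_univ 0) (Finset.mem_univ 3))
  -- beatpath bounds for P with 0 erased
  have cutE : ∀ u v : Fin 4, u ∈ (univ : Finset (Fin 4)).erase 0 →
      v ∈ (univ : Finset (Fin 4)).erase 0 →
      (u = 1 ∨ u = 2) → ¬(v = 1 ∨ v = 2) → margin (fun i => eraseCand 0 (P i)) u v ≤ 0 := by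
    have key : ∀ w : Fin 4, w ∈ (univ : Finset (Fin 4)).erase 0 → ¬(w = 1 ∨ w = 2) → w = 3 := by
      decide
    intro u v _ hv hAu hAv
    have h3 := key v hv hAv
    subst h3
    rcases hAu with rfl | rfl
    · rw [E13]; omega
    · rw [E23]
  have C1 : beatpath (fun i => eraseCand 0 (P i)) 1 3 ≤ 0 :=
    beatpath_le_of_cut _ 0 (fun u => u = 1 ∨ u = 2)
      ⟨_, path2 _ (by decide) (by decide)⟩ (Or.inl rfl) (by decide) cutE
  have C2 : beatpath (fun i => eraseCand 0 (P i)) 2 3 ≤ 0 :=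
    beatpath_le_of_cut _ 0 (fun u => u = 1 ∨ u = 2)
      ⟨_, path2 _ (by decide) (by decide)⟩ (Or.inr rfl) (by decide) cutE
  have C1' : (2:ℤ) ≤ beatpath (fun i => eraseCand 0 (P i)) 3 1 :=
    E31 ▸ le_beatpath (path2 _ (by decide) (by decide))
  have C2' : (2:ℤ) ≤ beatpath (fun i => eraseCand 0 (P i)) 3 2 := by
    have h := le_beatpath (path3 (fun i => eraseCand 0 (P i)) (x := 3) (y := 1) (z := 2)
      (by decide) (by decide) (by decide))
    rw [E31, E12] at h
    exact le_trans (by norm_num) h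
  -- beatpath bounds for P with 1 erased
  have cutF : ∀ u v : Fin 4, u ∈ (univ : Finset (Fin 4)).erase 1 →
      v ∈ (univ : Finset (Fin 4)).erase 1 →
      (u = 0 ∨ u = 3) → ¬(v = 0 ∨ v = 3) → margin (fun i => eraseCand 1 (P i)) u v ≤ 0 := by
    have key : ∀ w : Fin 4, w ∈ (univ : Finset (Fin 4)).erase 1 → ¬(w = 0 ∨ w = 3) → w = 2 := by
      decide
    intro u v _ hv hAu hAv
    have h2 := key v hv hAv
    subst h2
    rcases hAu with rfl | rfl
    · rw [F02]; omega
    · rw [F32]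
  have G1 : beatpath (fun i => eraseCand 1 (P i)) 0 2 ≤ 0 :=
    beatpath_le_of_cut _ 0 (fun u => u = 0 ∨ u = 3)
      ⟨_, path2 _ (by decide) (by decide)⟩ (Or.inl rfl) (by decide) cutF
  have G2 : beatpath (fun i => eraseCand 1 (P i)) 3 2 ≤ 0 :=
    beatpath_le_of_cut _ 0 (fun u => u = 0 ∨ u = 3)
      ⟨_, path2 _ (by decide) (by decide)⟩ (Or.inr rfl) (by decide) cutF
  have G1' : (8:ℤ) ≤ beatpath (fun i => eraseCand 1 (P i)) 2 0 :=
    F20 ▸ le_beatpath (path2 _ (by decide) (by decide))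
  have G2' : (4:ℤ) ≤ beatpath (fun i => eraseCand 1 (P i)) 2 3 := by
    have h := le_beatpath (path3 (fun i => eraseCand 1 (P i)) (x := 2) (y := 0) (z := 3)
      (by decide) (by decide) (by decide))
    rw [F20, F03] at h
    exact le_trans (by norm_num) h
  -- numeric facts
  have hn0 : (0:ℝ) < ((2*k+26 : ℕ):ℝ) := by positivity
  have hkc : (13:ℝ)/(min α β) ≤ ((2*k+26:ℕ):ℝ) := by
    have h1 : (13:ℝ)/(min α β) ≤ (⌈(13:ℝ) / min α β⌉₊ : ℝ) := Nat.le_ceil _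
    have h2 : (⌈(13:ℝ)/min α β⌉₊ : ℝ) ≤ ((2*k+26:ℕ):ℝ) := by
      have h3 := le_max_right 3 ⌈(13:ℝ) / min α β⌉₊
      have h4 : ⌈(13:ℝ) / min α β⌉₊ ≤ 2*k+26 := by omega
      exact_mod_cast h4
    linarith
  have h13 : (13:ℝ) ≤ ((2*k+26:ℕ):ℝ) * min α β := (div_le_iff₀ hm0).mp hkc
  refine ⟨2*k+26, by omega, P, ?_, ?_, ?_, ?_, ?_, ?_, ?_, ?_⟩
  · -- deletion-clone value
    have hcard : (univ.filter fun i : Fin (2*k+26) =>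
        1 < ((rpos (P i) 0 : ℤ) - (rpos (P i) 1 : ℤ)).natAbs).card = 13 := by
      rw [hP, Finset.card_filter]
      have h := sum_BProf (M := ℕ) k r1 r2 r3 r4 r5 r6
        (fun r => if 1 < ((rpos r 0 : ℤ) - (rpos r 1 : ℤ)).natAbs then 1 else 0)
      refine h.trans ?_
      norm_num [show ((rpos r1 0 : ℤ) - (rpos r1 1 : ℤ)).natAbs = 1 from by decide,
        show ((rpos r2 0 : ℤ) - (rpos r2 1 : ℤ)).natAbs = 1 from by decide,
        show ((rpos r3 0 : ℤ) - (rpos r3 1 : ℤ)).natAbs = 2 from by decide,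
        show ((rpos r4 0 : ℤ) - (rpos r4 1 : ℤ)).natAbs = 1 from by decide,
        show ((rpos r5 0 : ℤ) - (rpos r5 1 : ℤ)).natAbs = 2 from by decide,
        show ((rpos r6 0 : ℤ) - (rpos r6 1 : ℤ)).natAbs = 1 from by decide]
    rw [hcard, div_le_iff₀ hn0]
    calc (13:ℝ) ≤ ((2*k+26:ℕ):ℝ) * min α β := h13
      _ ≤ ((2*k+26:ℕ):ℝ) * α := mul_le_mul_of_nonneg_left (min_le_left α β) hn0.le
      _ = α * ((2*k+26:ℕ):ℝ) := mul_comm _ _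
  · -- swap-clone value
    have hsum : (∑ i : Fin (2*k+26),
        ((((rpos (P i) 0 : ℤ) - (rpos (P i) 1 : ℤ)).natAbs : ℝ) - 1)) = 13 := by
      rw [hP]
      have h := sum_BProf (M := ℝ) k r1 r2 r3 r4 r5 r6
        (fun r => ((((rpos r 0 : ℤ) - (rpos r 1 : ℤ)).natAbs : ℝ) - 1))
      refine h.trans ?_
      norm_num [show ((rpos r1 0 : ℤ) - (rpos r1 1 : ℤ)).natAbs = 1 from by decide,
        show ((rpos r2 0 : ℤ) - (rpos r2 1 : ℤ)).natAbs = 1 from by decide,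
        show ((rpos r3 0 : ℤ) - (rpos r3 1 : ℤ)).natAbs = 2 from by decide,
        show ((rpos r4 0 : ℤ) - (rpos r4 1 : ℤ)).natAbs = 1 from by decide,
        show ((rpos r5 0 : ℤ) - (rpos r5 1 : ℤ)).natAbs = 2 from by decide,
        show ((rpos r6 0 : ℤ) - (rpos r6 1 : ℤ)).natAbs = 1 from by decide]
    rw [hsum, div_le_iff₀ hn0]
    calc (13:ℝ) ≤ ((2*k+26:ℕ):ℝ) * min α β := h13
      _ ≤ ((2*k+26:ℕ):ℝ) * β := mul_le_mul_of_nonneg_left (min_le_right α β) hn0.le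
      _ = β * ((2*k+26:ℕ):ℝ) := mul_comm _ _
  · -- a = 0 is a Schulze winner of P
    refine ⟨Finset.mem_univ 0, ?_⟩
    intro y _ hy
    have key : ∀ w : Fin 4, w ≠ 0 → w = 1 ∨ w = 2 ∨ w = 3 := by decide
    rcases key y hy with rfl | rfl | rfl
    · linarith [B1, B1', hkZ]
    · linarith [B2, B2']
    · linarith [B3, B3']
  · -- uniqueness for P
    intro y hy
    rintro ⟨-, hall⟩
    have h0 := hall 0 (Finset.mem_univ 0) (fun h => hy h.symm)
    have key : ∀ w : Fin 4, w ≠ 0 → w = 1 ∨ w = 2 ∨ w = 3 := by decide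
    rcases key y hy with rfl | rfl | rfl
    · linarith [B1, B1', hkZ]
    · linarith [B2, B2']
    · linarith [B3, B3']
  · -- d = 3 is a Schulze winner of P₋a
    refine ⟨by decide, ?_⟩
    intro y hyD hy
    have key : ∀ w : Fin 4, w ∈ (univ : Finset (Fin 4)).erase 0 → w ≠ 3 → w = 1 ∨ w = 2 := by
      decide
    rcases key y hyD hy with rfl | rfl
    · linarith [C1, C1']
    · linarith [C2, C2']
  · -- uniqueness for P₋a
    intro y hy
    rintro ⟨hmem, hall⟩
    have key : ∀ w : Fin 4, w ≠ 3 → w = 0 ∨ w = 1 ∨ w = 2 := by decide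
    rcases key y hy with rfl | rfl | rfl
    · exact absurd hmem (by decide)
    · have h := hall 3 (by decide) (by decide)
      linarith [C1, C1']
    · have h := hall 3 (by decide) (by decide)
      linarith [C2, C2']
  · -- c = 2 is a Schulze winner of P₋b
    refine ⟨by decide, ?_⟩
    intro y hyD hy
    have key : ∀ w : Fin 4, w ∈ (univ : Finset (Fin 4)).erase 1 → w ≠ 2 → w = 0 ∨ w = 3 := by
      decide
    rcases key y hyD hy with rfl | rfl
    · linarith [G1, G1']
    · linarith [G2, G2']
  · -- uniqueness for P₋b
    intro y hy
    rintro ⟨hmem, hall⟩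
    have key : ∀ w : Fin 4, w ≠ 2 → w = 0 ∨ w = 1 ∨ w = 3 := by decide
    rcases key y hy with rfl | rfl | rfl
    · have h := hall 2 (by decide) (by decide)
      linarith [G1, G1']
    · exact absurd hmem (by decide)
    · have h := hall 2 (by decide) (by decide)
      linarith [G2, G2']
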